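/- Let z*, z*_φ ∈ Z and μ*_φ ∈ ℝᵐ₊. Assume g(z*) ≤ 0 componentwise, and assume the first-order optimality condition ⟨∇f(z*_φ) + Σⱼ (μ*_φ)ⱼ ∇gⱼ(z*_φ), z − z*_φ⟩ ≥ 0 for all z ∈ Z. Then ⟨μ*_φ, g(z*_φ)⟩ ≤ −⟨∇f(z*_φ), z*_φ − z*⟩. -/

import Mathlib

open scoped InnerProductSpace

lemma grad_convex_ineq {E : Type*} [NormedAddCommGroup E] [InnerProductSpace ℝ E] [CompleteSpace E]
    {h : E → ℝ} (hc : ConvexOn ℝ Set.univ h) {x gx : E} (hg : HasGradientAt h gx x) (y : E) :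
    h x + ⟪gx, y - x⟫_ℝ ≤ h y := by
  set p : ℝ → ℝ := fun t => h (x + t • (y - x)) with hp
  have hpc : ConvexOn ℝ Set.univ p := by
    have := hc.comp_affineMap (AffineMap.lineMap x y : ℝ →ᵃ[ℝ] E)
    have e : p = h ∘ AffineMap.lineMap x y := by
      funext t
      simp only [p, Function.comp, AffineMap.lineMap_apply_module, Set.preimage_univ]
      congr 1
      module
    rw [e]; simpa using this
  have hline : HasDerivAt (fun t : ℝ => x + t • (y - x)) (y - x) 0 := by
    simpa using ((hasDerivAt_id (0:ℝ)).smul_const (y - x)).const_add x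
  have hF : HasFDerivAt h ((InnerProductSpace.toDual ℝ E) gx) (x + (0:ℝ) • (y - x)) := by
    simpa using hasGradientAt_iff_hasFDerivAt.mp hg
  have hd : HasDerivAt p ⟪gx, y - x⟫_ℝ 0 := by
    have := hF.comp_hasDerivAt (0:ℝ) hline
    exact this
  have hs := hpc.le_slope_of_hasDerivAt (Set.mem_univ (0:ℝ)) (Set.mem_univ (1:ℝ))
    one_pos hd
  have : slope p 0 1 = h y - h x := by
    simp [slope_def_field, p]
  rw [this] at hs
  linarith

theorem regularized_multiplier_ineq {n m : ℕ}
    (Z : Set (EuclideanSpace ℝ (Fin n)))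
    (hZne : Z.Nonempty) (hZcomp : IsCompact Z) (hZconv : Convex ℝ Z)
    (f : EuclideanSpace ℝ (Fin n) → ℝ)
    (f' : EuclideanSpace ℝ (Fin n) → EuclideanSpace ℝ (Fin n))
    (hf : ∀ x, HasGradientAt f (f' x) x)
    (g : EuclideanSpace ℝ (Fin n) → EuclideanSpace ℝ (Fin m))
    (g' : Fin m → EuclideanSpace ℝ (Fin n) → EuclideanSpace ℝ (Fin n))
    (hg : ∀ j x, HasGradientAt (fun z => g z j) (g' j x) x)
    (hgconv : ∀ j, ConvexOn ℝ Set.univ (fun z => g z j))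
    (φ : ℝ) (hφ : 0 < φ)
    (zs zφ : EuclideanSpace ℝ (Fin n)) (hzs : zs ∈ Z) (hzφ : zφ ∈ Z)
    (μφ : EuclideanSpace ℝ (Fin m)) (hμφ : ∀ j, 0 ≤ μφ j)
    (hfeas : ∀ j, g zs j ≤ 0)
    (hopt : ∀ z ∈ Z, 0 ≤ ⟪f' zφ + ∑ j, μφ j • g' j zφ, z - zφ⟫_ℝ) :
    ∑ j, μφ j * g zφ j ≤ -⟪f' zφ, zφ - zs⟫_ℝ := by
  have h1 := hopt zs hzs
  rw [inner_add_left, sum_inner] at h1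
  have h2 : ∀ j, μφ j * g zφ j ≤ μφ j * (g zs j) - ⟪μφ j • g' j zφ, zs - zφ⟫_ℝ := by
    intro j
    have := grad_convex_ineq (hgconv j) (hg j zφ) zs
    rw [real_inner_smul_left]
    nlinarith [hμφ j, this]
  have h3 : ∑ j, μφ j * g zφ j ≤
      ∑ j, (μφ j * (g zs j) - ⟪μφ j • g' j zφ, zs - zφ⟫_ℝ) :=
    Finset.sum_le_sum fun j _ => h2 j
  rw [Finset.sum_sub_distrib] at h3
  have h4 : ∑ j, μφ j * g zs j ≤ 0 :=
    Finset.sum_nonpos fun j _ => mul_nonpos_of_nonneg_of_nonpos (hμφ j) (hfeas j)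
  have h5 : ⟪f' zφ, zφ - zs⟫_ℝ = -⟪f' zφ, zs - zφ⟫_ℝ := by
    rw [← inner_neg_right]; congr 1; abel
  linarith
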